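/- The harmonic product h₁ ∗ h₂ := (h₁h₂)₀, where (·)₀ denotes the harmonic (degree-preserving top) component in the harmonic decomposition of the ordinary product, is commutative and associative on harmonic polynomials: (h₁ ∗ h₂) ∗ h₃ = h₁ ∗ (h₂ ∗ h₃). -/

import Mathlib

open MvPolynomial Finsupp

/-- The quadratic form `q(x,y,z) = x² + y² + z²`. -/
noncomputable def qForm : MvPolynomial (Fin 3) ℝ := ∑ i : Fin 3, X i ^ 2

/-- The Laplacian of a polynomial on `ℝ³`. -/
noncomputable def lap (p : MvPolynomial (Fin 3) ℝ) : MvPolynomial (Fin 3) ℝ :=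
  ∑ i : Fin 3, pderiv i (pderiv i p)

/-- A polynomial is harmonic if its Laplacian vanishes. -/
def Harmonic (p : MvPolynomial (Fin 3) ℝ) : Prop := lap p = 0

/-- Factorial weight of a monomial. -/
noncomputable def wt (m : Fin 3 →₀ ℕ) : ℝ := ∏ j : Fin 3, (Nat.factorial (m j) : ℝ)

lemma wt_pos (m : Fin 3 →₀ ℕ) : 0 < wt m :=
  Finset.prod_pos fun j _ => by exact_mod_cast Nat.factorial_pos (m j)

lemma wt_add_single (m : Fin 3 →₀ ℕ) (i : Fin 3) :
    wt (m + Finsupp.single i 1) = ((m i : ℝ) + 1) * wt m := by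
  unfold wt
  rw [← Finset.mul_prod_erase _ _ (Finset.mem_univ i),
      ← Finset.mul_prod_erase _ (fun j => (Nat.factorial (m j) : ℝ)) (Finset.mem_univ i)]
  have h1 : ∀ j ∈ Finset.univ.erase i,
      (Nat.factorial (((m + Finsupp.single i 1) : Fin 3 →₀ ℕ) j) : ℝ) = (Nat.factorial (m j) : ℝ) := by
    intro j hj
    have : j ≠ i := (Finset.mem_erase.mp hj).1
    simp [Finsupp.add_apply, Finsupp.single_apply, this.symm]
  rw [Finset.prod_congr rfl h1]
  have : ((m + Finsupp.single i 1 : Fin 3 →₀ ℕ)) i = m i + 1 := by simp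
  rw [this, Nat.factorial_succ]
  push_cast
  ring

/-- Fischer-type pairing. -/
noncomputable def B (p r : MvPolynomial (Fin 3) ℝ) : ℝ :=
  ∑ m ∈ p.support, coeff m p * coeff m r * wt m

lemma B_eq_sum_subset {p r : MvPolynomial (Fin 3) ℝ} {S : Finset (Fin 3 →₀ ℕ)}
    (h : p.support ⊆ S) : B p r = ∑ m ∈ S, coeff m p * coeff m r * wt m :=
  Finset.sum_subset h (fun m _ hm => by
    simp [MvPolynomial.notMem_support_iff.mp hm])

lemma B_monomial (s : Fin 3 →₀ ℕ) (c : ℝ) (r : MvPolynomial (Fin 3) ℝ) :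
    B (monomial s c) r = c * coeff s r * wt s := by
  by_cases hc : c = 0
  · simp [B, hc]
  · rw [B, support_monomial, if_neg hc, Finset.sum_singleton, coeff_monomial, if_pos rfl]

lemma B_add_left (p q r : MvPolynomial (Fin 3) ℝ) : B (p + q) r = B p r + B q r := by
  rw [B_eq_sum_subset (S := p.support ∪ q.support)
        (MvPolynomial.support_add),
      B_eq_sum_subset (S := p.support ∪ q.support) Finset.subset_union_left,
      B_eq_sum_subset (S := p.support ∪ q.support) (Finset.subset_union_right),
      ← Finset.sum_add_distrib]
  refine Finset.sum_congr rfl fun m _ => by rw [coeff_add]; ring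

lemma B_add_right (p r s : MvPolynomial (Fin 3) ℝ) : B p (r + s) = B p r + B p s := by
  unfold B
  rw [← Finset.sum_add_distrib]
  refine Finset.sum_congr rfl fun m _ => by rw [coeff_add]; ring

lemma B_zero_right (p : MvPolynomial (Fin 3) ℝ) : B p 0 = 0 := by
  simp [B]

lemma coeff_pderiv (i : Fin 3) (h : MvPolynomial (Fin 3) ℝ) (m : Fin 3 →₀ ℕ) :
    coeff m (pderiv i h) = ((m i : ℝ) + 1) * coeff (m + Finsupp.single i 1) h := by
  induction h using MvPolynomial.induction_on' with
  | monomial s a =>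
    rw [pderiv_monomial, coeff_monomial, coeff_monomial]
    by_cases hs : s = m + Finsupp.single i 1
    · subst hs
      have h1 : (m + Finsupp.single i 1 : Fin 3 →₀ ℕ) - Finsupp.single i 1 = m := by
        ext j
        by_cases hj : j = i
        · subst hj; simp
        · simp [Finsupp.single_apply, Ne.symm hj]
      have h2 : ((m + Finsupp.single i 1 : Fin 3 →₀ ℕ)) i = m i + 1 := by simp
      rw [h1, h2]
      simp only [if_pos rfl]
      push_cast; ring
    · rw [if_neg hs]
      by_cases h0 : s i = 0
      · have hss : s - Finsupp.single i 1 = s := by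
          ext j
          by_cases hj : j = i
          · subst hj; simp [h0]
          · simp [Finsupp.single_apply, Ne.symm hj]
        rw [hss]
        split_ifs with h2
        · subst h2; simp [h0]
        · rw [mul_zero]
      · have hne : s - Finsupp.single i 1 ≠ m := by
          intro hmm
          apply hs
          have : s - Finsupp.single i 1 + Finsupp.single i 1 = s := by
            ext j
            by_cases hj : j = i
            · subst hj; simp; omega
            · simp [Finsupp.single_apply, Ne.symm hj]
          rw [← this, hmm]
        rw [if_neg hne, mul_zero]
  | add p q hp hq => simp only [map_add, coeff_add, hp, hq]; ring

lemma B_X_mul (i : Fin 3) (g h : MvPolynomial (Fin 3) ℝ) :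
    B (X i * g) h = B g (pderiv i h) := by
  induction g using MvPolynomial.induction_on' with
  | monomial s a =>
    rw [X, monomial_mul, one_mul, B_monomial, B_monomial, coeff_pderiv,
        add_comm (Finsupp.single i 1) s, wt_add_single, add_comm s (Finsupp.single i 1)]
    ring
  | add p q hp hq =>
    rw [mul_add, B_add_left, B_add_left, hp, hq]

lemma B_q_mul (g h : MvPolynomial (Fin 3) ℝ) : B (qForm * g) h = B g (lap h) := by
  have key : ∀ i : Fin 3, B (X i ^ 2 * g) h = B g (pderiv i (pderiv i h)) := by
    intro i
    rw [pow_two, mul_assoc, B_X_mul, B_X_mul]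
  rw [qForm, lap, Fin.sum_univ_three, Fin.sum_univ_three, add_mul, add_mul,
      B_add_left, B_add_left, B_add_right, B_add_right, key, key, key]

lemma eq_zero_of_B_self {p : MvPolynomial (Fin 3) ℝ} (h : B p p = 0) : p = 0 := by
  by_contra hp
  obtain ⟨m, hm⟩ := (MvPolynomial.support_nonempty.mpr hp)
  have hpos : 0 < B p p := by
    apply Finset.sum_pos' (fun n _ => mul_nonneg (mul_self_nonneg _) (wt_pos n).le)
    exact ⟨m, hm, mul_pos (mul_self_pos.mpr (MvPolynomial.mem_support_iff.mp hm)) (wt_pos m)⟩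
  linarith

lemma lap_sub (a b : MvPolynomial (Fin 3) ℝ) : lap (a - b) = lap a - lap b := by
  simp [lap, map_sub, Finset.sum_sub_distrib]

lemma harmonic_qmul (g : MvPolynomial (Fin 3) ℝ) (h : Harmonic (qForm * g)) :
    qForm * g = 0 :=
  eq_zero_of_B_self (by rw [B_q_mul, h, B_zero_right])

lemma harmonic_unique {h₁ h₂ g : MvPolynomial (Fin 3) ℝ} (H1 : Harmonic h₁)
    (H2 : Harmonic h₂) (e : h₁ - h₂ = qForm * g) : h₁ = h₂ := by
  have hq : Harmonic (qForm * g) := by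
    rw [Harmonic, ← e, lap_sub, H1, H2, sub_zero]
  have := harmonic_qmul g hq
  rw [this] at e
  exact sub_eq_zero.mp e

/-- `star` is a harmonic product: `star h₁ h₂` is the harmonic projection `(h₁h₂)₀`
of the ordinary product, i.e. it is harmonic and differs from `h₁h₂` by a multiple of `q`. -/
def IsHarmonicProduct (star : MvPolynomial (Fin 3) ℝ → MvPolynomial (Fin 3) ℝ →
    MvPolynomial (Fin 3) ℝ) : Prop :=
  ∀ h₁ h₂, Harmonic h₁ → Harmonic h₂ →
    Harmonic (star h₁ h₂) ∧ ∃ g, h₁ * h₂ - star h₁ h₂ = qForm * g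

/-- **The harmonic product is commutative and associative** on harmonic polynomials. -/
theorem harmonicProduct_comm_assoc
    (star : MvPolynomial (Fin 3) ℝ → MvPolynomial (Fin 3) ℝ → MvPolynomial (Fin 3) ℝ)
    (hstar : IsHarmonicProduct star) :
    ∀ h₁ h₂ h₃ : MvPolynomial (Fin 3) ℝ, Harmonic h₁ → Harmonic h₂ → Harmonic h₃ →
      star h₁ h₂ = star h₂ h₁ ∧ star (star h₁ h₂) h₃ = star h₁ (star h₂ h₃) := by
  intro h₁ h₂ h₃ H1 H2 H3
  obtain ⟨Hc12, g12, e12⟩ := hstar h₁ h₂ H1 H2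
  obtain ⟨Hc21, g21, e21⟩ := hstar h₂ h₁ H2 H1
  obtain ⟨Hc23, g23, e23⟩ := hstar h₂ h₃ H2 H3
  obtain ⟨HcA, gA, eA⟩ := hstar (star h₁ h₂) h₃ Hc12 H3
  obtain ⟨HcB, gB, eB⟩ := hstar h₁ (star h₂ h₃) H1 Hc23
  constructor
  · exact harmonic_unique Hc12 Hc21 (g := g21 - g12) (by linear_combination e21 - e12)
  · exact harmonic_unique HcA HcB (g := h₁ * g23 + gB - g12 * h₃ - gA)
      (by linear_combination eB - eA + h₁ * e23 - h₃ * e12)
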